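/- Let X have a distribution symmetric about μ with variance σ² > 0, and let t < μ − σ. Then E[X | X ≥ t] ≤ μ + (μ−t)σ²/(2(t−μ)² − σ²), provided P(X ≥ t) > 0. -/

import Mathlib

open MeasureTheory Set

theorem stmt5 (P : Measure ℝ) [IsProbabilityMeasure P] (m s t : ℝ)
    (hsym : P.map (fun x => 2 * m - x) = P)
    (hX : Integrable (fun x => x) P) (hX2 : Integrable (fun x => x ^ 2) P)
    (hmean : ∫ x, x ∂P = m) (hvar : ∫ x, (x - m) ^ 2 ∂P = s ^ 2)
    (hs : 0 < s) (ht : t < m - s)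
    (hpos : 0 < (P {x : ℝ | t ≤ x}).toReal) :
    (∫ x in {x : ℝ | t ≤ x}, x ∂P) / (P {x : ℝ | t ≤ x}).toReal
      ≤ m + (m - t) * s ^ 2 / (2 * (t - m) ^ 2 - s ^ 2) := by
  have hu : 0 < m - t := by linarith
  have hus : s < m - t := by linarith
  -- measurable embedding
  have hemb : MeasurableEmbedding (fun x : ℝ => 2 * m - x) := by
    have h : (fun x : ℝ => 2 * m - x) = (fun x : ℝ => 2 * m + x) ∘ (fun x : ℝ => -x) := by
      funext x; simp [sub_eq_add_neg]
    rw [h]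
    exact ((Homeomorph.neg ℝ).trans (Homeomorph.addLeft (2 * m))).measurableEmbedding
  have hf1 : Integrable (fun x => x - m) P := hX.sub (integrable_const m)
  have hf2 : Integrable (fun x => (x - m) ^ 2) P := by
    have h : (fun x : ℝ => (x - m) ^ 2) = fun x => x ^ 2 - (2 * m) * x + m ^ 2 := by
      funext x; ring
    rw [h]
    exact (hX2.sub (hX.const_mul _)).add (integrable_const _)
  have hkey : ∀ (f : ℝ → ℝ) (B : Set ℝ), MeasurableSet B →
      ∫ x in B, f x ∂P = ∫ x in (fun x : ℝ => 2 * m - x) ⁻¹' B, f (2 * m - x) ∂P := by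
    intro f B hB
    conv_lhs => rw [← hsym]
    exact hemb.setIntegral_map f B
  have hkeyM : ∀ B : Set ℝ, MeasurableSet B →
      P B = P ((fun x : ℝ => 2 * m - x) ⁻¹' B) := by
    intro B hB
    conv_lhs => rw [← hsym]
    exact Measure.map_apply hemb.measurable hB
  have hmean0 : ∫ x, (x - m) ∂P = 0 := by
    rw [integral_sub hX (integrable_const m), hmean, integral_const]
    simp
  have hS : MeasurableSet {x : ℝ | t ≤ x} := measurableSet_Ici
  have hpre1 : (fun x : ℝ => 2 * m - x) ⁻¹' {x : ℝ | t ≤ x} = Iic (2 * m - t) := by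
    ext x
    simp only [mem_preimage, mem_setOf_eq, mem_Iic]
    constructor <;> intro h <;> linarith
  have hpre2 : (fun x : ℝ => 2 * m - x) ⁻¹' (Ioi (2 * m - t)) = Iio t := by
    ext x
    simp only [mem_preimage, mem_Ioi, mem_Iio]
    constructor <;> intro h <;> linarith
  -- I = ∫_{x ≥ t} (x-m)  equals ∫_{x > 2m-t} (x-m)
  have h1 : ∫ x in {x : ℝ | t ≤ x}, (x - m) ∂P = ∫ x in Iic (2 * m - t), -(x - m) ∂P := by
    rw [hkey (fun x => x - m) _ hS, hpre1]
    exact integral_congr_ae (Filter.Eventually.of_forall fun x => by ring)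
  have hsplit : (∫ x in Iic (2 * m - t), (x - m) ∂P)
      + ∫ x in Ioi (2 * m - t), (x - m) ∂P = 0 := by
    have h := integral_add_compl (measurableSet_Iic : MeasurableSet (Iic (2 * m - t))) hf1
    rw [compl_Iic] at h
    rw [h, hmean0]
  have hIeq : ∫ x in {x : ℝ | t ≤ x}, (x - m) ∂P = ∫ x in Ioi (2 * m - t), (x - m) ∂P := by
    rw [h1, integral_neg]
    linarith
  -- square symmetry
  have hJ : ∫ x in Ioi (2 * m - t), (x - m) ^ 2 ∂P = ∫ x in Iio t, (x - m) ^ 2 ∂P := by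
    rw [hkey (fun x => (x - m) ^ 2) _ measurableSet_Ioi, hpre2]
    exact integral_congr_ae (Filter.Eventually.of_forall fun x => by ring)
  have hJhalf : 2 * (∫ x in Ioi (2 * m - t), (x - m) ^ 2 ∂P) ≤ s ^ 2 := by
    have hdisj : Disjoint (Iio t) (Ioi (2 * m - t)) := by
      rw [Set.disjoint_left]
      intro x hx hx'
      simp only [mem_Iio] at hx
      simp only [mem_Ioi] at hx'
      linarith
    have hun : ∫ x in Iio t ∪ Ioi (2 * m - t), (x - m) ^ 2 ∂P
        = (∫ x in Iio t, (x - m) ^ 2 ∂P) + ∫ x in Ioi (2 * m - t), (x - m) ^ 2 ∂P :=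
      setIntegral_union hdisj measurableSet_Ioi hf2.integrableOn hf2.integrableOn
    have hle : ∫ x in Iio t ∪ Ioi (2 * m - t), (x - m) ^ 2 ∂P ≤ ∫ x, (x - m) ^ 2 ∂P :=
      setIntegral_le_integral hf2 (Filter.Eventually.of_forall fun x => sq_nonneg _)
    rw [hvar] at hle
    linarith [hJ, hun, hle]
  -- Chebyshev
  have hqeq : (P (Iio t)).toReal = (P (Ioi (2 * m - t))).toReal := by
    have hpre3 : (fun x : ℝ => 2 * m - x) ⁻¹' (Iio t) = Ioi (2 * m - t) := by
      ext x
      simp only [mem_preimage, mem_Ioi, mem_Iio]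
      constructor <;> intro h <;> linarith
    have h := hkeyM (Iio t) measurableSet_Iio
    rw [hpre3] at h
    rw [h]
  have hcheb : (m - t) ^ 2 * (P (Ioi (2 * m - t))).toReal ≤ s ^ 2 / 2 := by
    have hmono : ∫ x in Ioi (2 * m - t), (m - t) ^ 2 ∂P
        ≤ ∫ x in Ioi (2 * m - t), (x - m) ^ 2 ∂P := by
      apply setIntegral_mono_on
        (integrableOn_const (measure_ne_top _ _))
        hf2.integrableOn measurableSet_Ioi
      intro x hx
      simp only [mem_Ioi] at hx
      nlinarith
    rw [setIntegral_const, smul_eq_mul, measureReal_def] at hmono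
    linarith [hmono, hJhalf, mul_comm (P (Ioi (2 * m - t))).toReal ((m - t) ^ 2)]
  -- bound on I
  have hIle : 2 * (m - t) * (∫ x in Ioi (2 * m - t), (x - m) ∂P) ≤ s ^ 2 := by
    have hmono : ∫ x in Ioi (2 * m - t), (x - m) ∂P
        ≤ ∫ x in Ioi (2 * m - t), (x - m) ^ 2 / (m - t) ∂P := by
      apply setIntegral_mono_on hf1.integrableOn (hf2.integrableOn.div_const (m - t))
        measurableSet_Ioi
      intro x hx
      simp only [mem_Ioi] at hx
      rw [le_div_iff₀ hu]
      nlinarith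
    rw [integral_div] at hmono
    have h2 := (le_div_iff₀ hu).mp hmono
    nlinarith [hJhalf, h2]
  -- probability relation
  have hpq : (P {x : ℝ | t ≤ x}).toReal + (P (Iio t)).toReal = 1 := by
    have h := measure_add_measure_compl (μ := P) hS
    have hcompl : {x : ℝ | t ≤ x}ᶜ = Iio t := by
      ext x; simp [not_le]
    rw [hcompl, measure_univ] at h
    have h2 := congrArg ENNReal.toReal h
    rw [ENNReal.toReal_add (measure_ne_top _ _) (measure_ne_top _ _)] at h2
    simpa using h2
  have hp2 : 2 * (m - t) ^ 2 - s ^ 2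
      ≤ 2 * ((m - t) ^ 2 * (P {x : ℝ | t ≤ x}).toReal) := by
    have hp1 : (P {x : ℝ | t ≤ x}).toReal = 1 - (P (Ioi (2 * m - t))).toReal := by
      rw [← hqeq]; linarith
    rw [hp1]
    nlinarith [hcheb]
  -- numerator decomposition
  have hnum : ∫ x in {x : ℝ | t ≤ x}, x ∂P
      = (∫ x in {x : ℝ | t ≤ x}, (x - m) ∂P) + m * (P {x : ℝ | t ≤ x}).toReal := by
    have h := integral_sub hX.integrableOn
      ((integrable_const m).integrableOn : IntegrableOn (fun _ => m) {x : ℝ | t ≤ x} P)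
    rw [setIntegral_const, smul_eq_mul] at h
    have h' : ∫ x in {x : ℝ | t ≤ x}, (x - m) ∂P
        = (∫ x in {x : ℝ | t ≤ x}, x ∂P) - (P {x : ℝ | t ≤ x}).toReal * m := h
    linarith
  -- final arithmetic
  have hD : (0:ℝ) < 2 * (m - t) ^ 2 - s ^ 2 := by nlinarith
  have htar : 2 * (t - m) ^ 2 - s ^ 2 = 2 * (m - t) ^ 2 - s ^ 2 := by ring
  rw [hnum, hIeq, htar, add_div, mul_div_assoc, div_self (ne_of_gt hpos), mul_one]
  have hgoal : (∫ x in Ioi (2 * m - t), (x - m) ∂P) / (P {x : ℝ | t ≤ x}).toReal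
      ≤ (m - t) * s ^ 2 / (2 * (m - t) ^ 2 - s ^ 2) := by
    clear hnum hIeq hJ hJhalf hcheb hqeq hpq hmean0 h1 hsplit
    generalize hIg : (∫ x in Ioi (2 * m - t), (x - m) ∂P) = I at hIle ⊢
    generalize hpg : (P {x : ℝ | t ≤ x}).toReal = p at hpos hp2 ⊢
    rcases le_or_gt I 0 with hI0 | hI0
    · have hle0 : I / p ≤ 0 := div_nonpos_of_nonpos_of_nonneg hI0 (le_of_lt hpos)
      have hR : 0 ≤ (m - t) * s ^ 2 / (2 * (m - t) ^ 2 - s ^ 2) := by positivity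
      linarith
    · rw [div_le_div_iff₀ hpos hD]
      nlinarith [mul_le_mul_of_nonneg_right hIle (le_of_lt hD),
        mul_le_mul_of_nonneg_left hp2 (sq_nonneg s), hu, hI0]
  linarith [hgoal]
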